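/- (Theorem 3.) An incompatibility measure ψ : P* → ℝ^A satisfies 'convex linearity', 'allocation of incompatibility', 'anonymity', and 'no cost—no incompatibility' if and only if it coincides with the Shapley incompatibility measure φ. -/

import Mathlib

open Finset

variable {A : Type*} [Fintype A] [DecidableEq A]

/-- `p` restricted to nonempty subsets belongs to the set `P` of consistent collections. -/
def memP (p : Finset A → ℝ) : Prop :=
  ∃ π : Finset A → ℝ, (∀ W, 0 ≤ π W) ∧ (∑ W : Finset A, π W = 1) ∧
    ∀ S : Finset A, S.Nonempty →
      p S = ∑ W ∈ Finset.univ.filter (fun W : Finset A => S ⊆ W), π W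

/-- `p ∈ P*`: `p ∅ = 1` and the restriction of `p` to nonempty subsets lies in `P`. -/
def memPStar (p : Finset A → ℝ) : Prop :=
  p ∅ = 1 ∧ memP p

/-- The Shapley incompatibility measure:
`φ_a(p) = Σ_{S ⊆ A∖{a}} (|S|!(J−|S|−1)!/J!) (p_S − p_{S∪{a}})`. -/
noncomputable def shapley (p : Finset A → ℝ) (a : A) : ℝ :=
  ∑ S ∈ ((Finset.univ : Finset A).erase a).powerset,
    ((S.card.factorial * (Fintype.card A - S.card - 1).factorial : ℝ) /
        (Fintype.card A).factorial) * (p S - p (insert a S))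


/-- *Allocation of incompatibility*: `Σ_a ψ_a(p) = 1 − p_A`. -/
def Allocation (ψ : (Finset A → ℝ) → A → ℝ) : Prop :=
  ∀ p, memPStar p → ∑ a : A, ψ p a = 1 - p Finset.univ

/-- *Anonymity*: `ψ_a(p^π) = ψ_{π(a)}(p)` where `p^π_S = p_{π(S)}`. -/
def Anonymity (ψ : (Finset A → ℝ) → A → ℝ) : Prop :=
  ∀ π : Equiv.Perm A, ∀ p, memPStar p → ∀ a : A,
    ψ (fun S => p (S.image π)) a = ψ p (π a)

/-- *Convex linearity*: `ψ_a(λp + (1−λ)p′) = λψ_a(p) + (1−λ)ψ_a(p′)`. -/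
def ConvexLinearity (ψ : (Finset A → ℝ) → A → ℝ) : Prop :=
  ∀ p p', memPStar p → memPStar p' → ∀ l : ℝ, 0 ≤ l → l ≤ 1 → ∀ a : A,
    ψ (fun S => l * p S + (1 - l) * p' S) a = l * ψ p a + (1 - l) * ψ p' a

/-- *No cost—no incompatibility*: if `p_{S∪{a}} = p_S` for every `S ⊆ A ∖ {a}`, then
`ψ_a(p) = 0`. -/
def NoCost (ψ : (Finset A → ℝ) → A → ℝ) : Prop :=
  ∀ p, memPStar p → ∀ a : A,
    (∀ S ∈ ((Finset.univ : Finset A).erase a).powerset, p (insert a S) = p S) →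
    ψ p a = 0

lemma sum_choose_aux (J m : ℕ) (h : m < J) :
    ∑ k ∈ Finset.range (m+1), (J-1-k).choose (m-k) = J.choose m := by
  have key := Nat.sum_Icc_choose (J-1) (J-1-m)
  rw [show J-1-m+1 = J-m by omega, show J-1+1 = J by omega] at key
  rw [← Nat.choose_symm h.le, ← key]
  refine Finset.sum_nbij' (fun k => J-1-k) (fun i => J-1-i) ?_ ?_ ?_ ?_ ?_
  · intro k hk; simp only [mem_range] at hk; simp only [mem_Icc]; omega
  · intro i hi; simp only [mem_Icc] at hi; simp only [mem_range]; omega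
  · intro k hk; simp only [mem_range] at hk; show J-1-(J-1-k) = k; omega
  · intro i hi; simp only [mem_Icc] at hi; show J-1-(J-1-i) = i; omega
  · intro k hk; simp only [mem_range] at hk
    rw [← Nat.choose_symm (show m-k ≤ J-1-k by omega), show J-1-k-(m-k) = J-1-m by omega]

lemma nat_ident (J m : ℕ) (h : m < J) :
    (J - m) * ∑ k ∈ Finset.range (m+1), m.choose k * (k.factorial * (J - k - 1).factorial)
      = J.factorial := by
  have hterm : ∀ k ∈ Finset.range (m+1),
      m.choose k * (k.factorial * (J - k - 1).factorial)
        = m.factorial * (J-1-m).factorial * (J-1-k).choose (m-k) := by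
    intro k hk
    simp only [mem_range] at hk
    have hk' : k ≤ m := by omega
    have h1 : m.choose k * k.factorial * (m-k).factorial = m.factorial :=
      Nat.choose_mul_factorial_mul_factorial hk'
    have h2 : (J-1-k).choose (m-k) * (m-k).factorial * (J-1-m).factorial = (J-1-k).factorial := by
      have := Nat.choose_mul_factorial_mul_factorial (show m-k ≤ J-1-k by omega)
      rwa [show J-1-k-(m-k) = J-1-m by omega] at this
    rw [show J - k - 1 = J-1-k by omega, ← h2, ← h1]
    ring
  rw [Finset.sum_congr rfl hterm, ← Finset.mul_sum, sum_choose_aux J m h]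
  have h3 : (J-m) * (J-1-m).factorial = (J-m).factorial := by
    rw [show J-1-m = J-m-1 by omega]
    exact Nat.mul_factorial_pred (by omega)
  have h4 : J.choose m * m.factorial * (J-m).factorial = J.factorial :=
    Nat.choose_mul_factorial_mul_factorial h.le
  calc (J-m) * (m.factorial * (J-1-m).factorial * J.choose m)
      = J.choose m * m.factorial * ((J-m) * (J-1-m).factorial) := by ring
    _ = J.factorial := by rw [h3]; exact h4

lemma real_ident (J m : ℕ) (h : m < J) :
    ∑ k ∈ Finset.range (m+1),
      (m.choose k : ℝ) * (((k.factorial * (J - k - 1).factorial : ℕ) : ℝ) / (J.factorial : ℝ))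
      = 1 / ((J : ℝ) - m) := by
  have hJ : (J.factorial : ℝ) ≠ 0 := Nat.cast_ne_zero.mpr (Nat.factorial_ne_zero J)
  have hd : ((J : ℝ) - m) ≠ 0 := by
    have : (m : ℝ) < J := by exact_mod_cast h
    linarith
  have hn := congrArg (Nat.cast : ℕ → ℝ) (nat_ident J m h)
  push_cast [Nat.cast_sub h.le] at hn
  have hsum : ∑ k ∈ Finset.range (m+1),
      (m.choose k : ℝ) * ((k.factorial * (J - k - 1).factorial : ℕ) : ℝ)
        = (J.factorial : ℝ) / ((J:ℝ) - m) := by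
    rw [eq_div_iff hd]; push_cast; linear_combination hn
  simp_rw [← mul_div_assoc, ← Finset.sum_div, hsum]
  field_simp


/-- The extreme points of `P*`. -/
def pW (W : Finset A) : Finset A → ℝ := fun S => if S ⊆ W then 1 else 0

lemma pW_memPStar (W : Finset A) : memPStar (pW W) := by
  refine ⟨by simp [pW], fun V => if V = W then 1 else 0, fun V => by positivity, ?_, ?_⟩
  · simp
  · intro S _
    rw [Finset.sum_ite_eq' _ W (fun _ => (1:ℝ))]
    simp [pW]

lemma decompPStar {p : Finset A → ℝ} (hp : memPStar p) :
    ∃ π : Finset A → ℝ, (∀ W, 0 ≤ π W) ∧ (∑ W : Finset A, π W = 1) ∧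
      ∀ S, p S = ∑ W : Finset A, π W * pW W S := by
  obtain ⟨h0, π, hpos, hsum, hrep⟩ := hp
  refine ⟨π, hpos, hsum, fun S => ?_⟩
  rcases S.eq_empty_or_nonempty with rfl | hS
  · simp [pW, h0, hsum]
  · rw [hrep S hS, Finset.sum_filter]
    refine Finset.sum_congr rfl fun W _ => ?_
    by_cases h : S ⊆ W <;> simp [pW, h]

lemma shapley_comb {ι : Type*} (t : Finset ι) (c : ι → ℝ) (q : ι → Finset A → ℝ) (a : A) :
    shapley (fun S => ∑ W ∈ t, c W * q W S) a = ∑ W ∈ t, c W * shapley (q W) a := by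
  unfold shapley
  simp_rw [Finset.mul_sum]
  rw [Finset.sum_comm]
  refine Finset.sum_congr rfl fun S _ => ?_
  rw [← Finset.sum_sub_distrib, Finset.mul_sum]
  refine Finset.sum_congr rfl fun W _ => by ring

lemma pW_insert_eq (W : Finset A) (a : A) (ha : a ∈ W) (S : Finset A) :
    pW W (insert a S) = pW W S := by
  unfold pW
  congr 1
  simp [Finset.insert_subset_iff, ha, eq_iff_iff]

lemma shapley_pW_mem (W : Finset A) (a : A) (ha : a ∈ W) : shapley (pW W) a = 0 := by
  unfold shapley
  refine Finset.sum_eq_zero fun S _ => ?_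
  rw [pW_insert_eq W a ha S]
  ring

lemma shapley_pW_not_mem (W : Finset A) (a : A) (ha : a ∉ W) :
    shapley (pW W) a = 1 / ((Fintype.card A : ℝ) - W.card) := by
  have hWJ : W.card < Fintype.card A := by
    rw [← Finset.card_univ]
    exact Finset.card_lt_card (Finset.ssubset_univ_iff.mpr (fun h => ha (h ▸ Finset.mem_univ a)))
  unfold shapley
  have h1 : ∀ S ∈ ((Finset.univ : Finset A).erase a).powerset,
      ((S.card.factorial * (Fintype.card A - S.card - 1).factorial : ℝ) /
        (Fintype.card A).factorial) * (pW W S - pW W (insert a S))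
      = if S ⊆ W then ((S.card.factorial * (Fintype.card A - S.card - 1).factorial : ℝ) /
        (Fintype.card A).factorial) else 0 := by
    intro S _
    have h2 : pW W (insert a S) = 0 := by
      simp only [pW, if_neg (fun h : insert a S ⊆ W => ha (h (Finset.mem_insert_self a S)))]
    rw [h2]
    by_cases h : S ⊆ W <;> simp [pW, h]
  rw [Finset.sum_congr rfl h1]
  have hWsub : W.powerset ⊆ ((Finset.univ : Finset A).erase a).powerset :=
    Finset.powerset_mono.mpr (Finset.subset_erase.mpr ⟨Finset.subset_univ W, ha⟩)
  rw [← Finset.sum_subset hWsub (fun S _ hS => by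
    rw [if_neg]; exact fun h => hS (Finset.mem_powerset.mpr h))]
  have h3 : ∀ S ∈ W.powerset, (if S ⊆ W then ((S.card.factorial * (Fintype.card A - S.card - 1).factorial : ℝ) /
        (Fintype.card A).factorial) else 0)
      = ((S.card.factorial * (Fintype.card A - S.card - 1).factorial : ℝ) /
        (Fintype.card A).factorial) := fun S hS => if_pos (Finset.mem_powerset.mp hS)
  rw [Finset.sum_congr rfl h3, Finset.sum_powerset]
  have h4 : ∀ j ∈ Finset.range (W.card + 1),
      ∑ S ∈ Finset.powersetCard j W,
        ((S.card.factorial * (Fintype.card A - S.card - 1).factorial : ℝ) /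
          (Fintype.card A).factorial)
      = (W.card.choose j : ℝ) * (((j.factorial * (Fintype.card A - j - 1).factorial : ℕ) : ℝ)
          / ((Fintype.card A).factorial : ℝ)) := by
    intro j _
    have h5 : ∀ S ∈ Finset.powersetCard j W,
        ((S.card.factorial * (Fintype.card A - S.card - 1).factorial : ℝ) /
          (Fintype.card A).factorial)
        = (((j.factorial * (Fintype.card A - j - 1).factorial : ℕ) : ℝ) /
          ((Fintype.card A).factorial : ℝ)) := by
      intro S hS
      rw [(Finset.mem_powersetCard.mp hS).2]
      push_cast
      try ring
    rw [Finset.sum_congr rfl h5, Finset.sum_const, Finset.card_powersetCard, nsmul_eq_mul]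
    try push_cast
    try ring
  rw [Finset.sum_congr rfl h4]
  exact real_ident (Fintype.card A) W.card hWJ

lemma memPStar_comb {p p' : Finset A → ℝ} (hp : memPStar p) (hp' : memPStar p')
    (l : ℝ) (h0 : 0 ≤ l) (h1 : l ≤ 1) :
    memPStar (fun S => l * p S + (1 - l) * p' S) := by
  obtain ⟨e, π, hpos, hsum, hrep⟩ := hp
  obtain ⟨e', π', hpos', hsum', hrep'⟩ := hp'
  refine ⟨by simp [e, e'], fun W => l * π W + (1 - l) * π' W,
    fun W => by dsimp only; nlinarith [hpos W, hpos' W], ?_, ?_⟩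
  · rw [Finset.sum_add_distrib, ← Finset.mul_sum, ← Finset.mul_sum, hsum, hsum']; ring
  · intro S hS
    dsimp only
    rw [hrep S hS, hrep' S hS, Finset.sum_add_distrib, Finset.mul_sum, Finset.mul_sum]

lemma memPStar_perm {p : Finset A → ℝ} (hp : memPStar p) (σ : Equiv.Perm A) :
    memPStar (fun S => p (S.image σ)) := by
  obtain ⟨e, π, hpos, hsum, hrep⟩ := hp
  refine ⟨by simpa using e, fun V => π (V.image σ), fun V => hpos _, ?_, ?_⟩
  · rw [← hsum]
    exact Fintype.sum_equiv (Equiv.finsetCongr σ) _ _ (fun V => by simp [Equiv.finsetCongr, Finset.map_eq_image])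
  · intro S hS
    dsimp only
    rw [hrep (S.image σ) (hS.image σ)]
    refine Finset.sum_nbij' (fun W => W.image σ.symm) (fun V => V.image σ) ?_ ?_ ?_ ?_ ?_
    · intro W hW
      simp only [Finset.mem_filter, Finset.mem_univ, true_and] at hW ⊢
      intro x hx
      have := hW (Finset.mem_image_of_mem σ hx)
      simpa using Finset.mem_image_of_mem σ.symm this
    · intro V hV
      simp only [Finset.mem_filter, Finset.mem_univ, true_and] at hV ⊢
      exact (Finset.image_subset_image_iff σ.injective).mpr hV
    · intro W _; simp [Finset.image_image]
    · intro V _; simp [Finset.image_image]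
    · intro W _; simp [Finset.image_image]

lemma shapley_perm (σ : Equiv.Perm A) (p : Finset A → ℝ) (a : A) :
    shapley (fun S => p (S.image σ)) a = shapley p (σ a) := by
  unfold shapley
  refine Finset.sum_nbij' (fun S => S.image σ) (fun S => S.image σ.symm) ?_ ?_ ?_ ?_ ?_
  · intro S hS
    simp only [Finset.mem_powerset, Finset.subset_erase] at hS ⊢
    refine ⟨Finset.subset_univ _, fun h => ?_⟩
    obtain ⟨x, hx, hxa⟩ := Finset.mem_image.mp h
    exact hS.2 ((σ.injective hxa) ▸ hx)
  · intro S hS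
    simp only [Finset.mem_powerset, Finset.subset_erase] at hS ⊢
    refine ⟨Finset.subset_univ _, fun h => ?_⟩
    obtain ⟨x, hx, hxa⟩ := Finset.mem_image.mp h
    have : x = σ a := by simpa using congrArg σ hxa
    exact hS.2 (this ▸ hx)
  · intro S _; simp [Finset.image_image]
  · intro S _; simp [Finset.image_image]
  · intro S _
    dsimp only
    rw [Finset.card_image_of_injective _ σ.injective, Finset.image_insert]

lemma shapley_two (l m : ℝ) (p p' : Finset A → ℝ) (a : A) :
    shapley (fun S => l * p S + m * p' S) a = l * shapley p a + m * shapley p' a := by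
  unfold shapley
  rw [Finset.mul_sum, Finset.mul_sum, ← Finset.sum_add_distrib]
  exact Finset.sum_congr rfl fun S _ => by ring

lemma memPStar_combW (t : Finset (Finset A)) (c : Finset A → ℝ)
    (h0 : ∀ W ∈ t, 0 ≤ c W) (h1 : ∑ W ∈ t, c W = 1) :
    memPStar (fun S => ∑ W ∈ t, c W * pW W S) := by
  refine ⟨by simp [pW, h1], fun V => if V ∈ t then c V else 0,
    fun V => by by_cases h : V ∈ t <;> simp [h, h0], ?_, ?_⟩
  · rw [Finset.sum_ite_mem, Finset.univ_inter, h1]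
  · intro S _
    dsimp only
    rw [Finset.sum_filter]
    rw [show ∑ W ∈ t, c W * pW W S = ∑ W : Finset A, (if W ∈ t then c W * pW W S else 0) by
      rw [← Finset.sum_filter, Finset.filter_mem_eq_inter, Finset.univ_inter]]
    refine Finset.sum_congr rfl fun W _ => ?_
    by_cases hW : W ∈ t <;> by_cases hSW : S ⊆ W <;> simp [pW, hW, hSW]

lemma pW_swap (W : Finset A) (a b : A) (ha : a ∉ W) (hb : b ∉ W) :
    (fun S => pW W (S.image (Equiv.swap a b))) = pW W := by
  have key : ∀ S : Finset A, S ⊆ W → S.image (Equiv.swap a b) = S := by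
    intro S hSW
    rw [Finset.image_congr (g := id), Finset.image_id]
    intro x hx
    have hx' := hSW hx
    exact Equiv.swap_apply_of_ne_of_ne (fun h => ha (h ▸ hx')) (fun h => hb (h ▸ hx'))
  funext S
  unfold pW
  congr 1
  rw [eq_iff_iff]
  constructor
  · intro h
    have h2 := key _ h
    have h3 : (S.image (Equiv.swap a b)).image (Equiv.swap a b) = S := by
      rw [Finset.image_image]
      ext x
      simp
    rw [h2] at h3
    exact h3 ▸ h
  · intro h
    rw [key S h]
    exact h

lemma pW_univ_of_not_mem (W : Finset A) (a : A) (ha : a ∉ W) : pW W Finset.univ = 0 :=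
  if_neg (fun h => ha (h (Finset.mem_univ a)))

lemma psi_pW {ψ : (Finset A → ℝ) → A → ℝ} (hAl : Allocation ψ) (hAn : Anonymity ψ)
    (hNC : NoCost ψ) (W : Finset A) (a : A) :
    ψ (pW W) a = shapley (pW W) a := by
  have hmem : ∀ b ∈ W, ψ (pW W) b = 0 := fun b hb =>
    hNC (pW W) (pW_memPStar W) b (fun S _ => pW_insert_eq W b hb S)
  by_cases ha : a ∈ W
  · rw [hmem a ha, shapley_pW_mem W a ha]
  · rw [shapley_pW_not_mem W a ha]
    have hval : ∀ b ∈ Finset.univ \ W, ψ (pW W) b = ψ (pW W) a := by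
      intro b hb
      rw [Finset.mem_sdiff] at hb
      have h := hAn (Equiv.swap a b) (pW W) (pW_memPStar W) a
      rw [pW_swap W a b ha hb.2, Equiv.swap_apply_left] at h
      exact h.symm
    have halloc := hAl (pW W) (pW_memPStar W)
    rw [pW_univ_of_not_mem W a ha, sub_zero] at halloc
    rw [← Finset.sum_sdiff (Finset.subset_univ W)] at halloc
    rw [Finset.sum_eq_zero hmem, add_zero] at halloc
    rw [Finset.sum_congr rfl hval, Finset.sum_const, nsmul_eq_mul, Finset.card_univ_diff] at halloc
    have hWJ : W.card < Fintype.card A := by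
      rw [← Finset.card_univ]
      exact Finset.card_lt_card (Finset.ssubset_univ_iff.mpr (fun h => ha (h ▸ Finset.mem_univ a)))
    have hcast : ((Fintype.card A - W.card : ℕ) : ℝ) = (Fintype.card A : ℝ) - W.card := by
      push_cast [Nat.cast_sub hWJ.le]; ring
    rw [hcast] at halloc
    have hne : (Fintype.card A : ℝ) - W.card ≠ 0 := by
      have : (W.card : ℝ) < Fintype.card A := by exact_mod_cast hWJ
      linarith
    field_simp at halloc ⊢
    linarith

lemma psi_comb {ψ : (Finset A → ℝ) → A → ℝ} (hCL : ConvexLinearity ψ) (t : Finset (Finset A)) :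
    ∀ c : Finset A → ℝ, (∀ W ∈ t, 0 ≤ c W) → (∑ W ∈ t, c W = 1) → ∀ a : A,
      ψ (fun S => ∑ W ∈ t, c W * pW W S) a = ∑ W ∈ t, c W * ψ (pW W) a := by
  induction t using Finset.induction_on with
  | empty => intro c _ h1 _; simp at h1
  | insert i t hi ih =>
    intro c h0 h1 a
    rw [Finset.sum_insert hi] at h1 ⊢
    have hci : 0 ≤ c i := h0 i (Finset.mem_insert_self i t)
    have hs0 : 0 ≤ ∑ W ∈ t, c W :=
      Finset.sum_nonneg fun W hW => h0 W (Finset.mem_insert_of_mem hW)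
    set s := ∑ W ∈ t, c W with hs
    rcases eq_or_lt_of_le hs0 with hz | hpos
    · -- all remaining weights are zero
      have hall : ∀ W ∈ t, c W = 0 := by
        intro W hW
        have := (Finset.sum_eq_zero_iff_of_nonneg
          (fun W hW => h0 W (Finset.mem_insert_of_mem hW))).mp hz.symm
        exact this W hW
      have hc1 : c i = 1 := by rw [← hz] at h1; linarith
      have hfun : (fun S => c i * pW i S + ∑ W ∈ t, c W * pW W S) = pW i := by
        funext S
        rw [Finset.sum_eq_zero (fun W hW => by rw [hall W hW]; ring), hc1]
        ring
      rw [show (fun S => ∑ W ∈ insert i t, c W * pW W S) = pW i by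
        funext S; rw [Finset.sum_insert hi]; exact congrFun hfun S]
      rw [Finset.sum_eq_zero (fun W hW => by rw [hall W hW]; ring), hc1]
      ring
    · have hs1 : s ≤ 1 := by linarith
      have hci1 : c i ≤ 1 := by linarith
      have hsne : s ≠ 0 := ne_of_gt hpos
      have hq' : memPStar (fun S => ∑ W ∈ t, (c W / s) * pW W S) :=
        memPStar_combW t (fun W => c W / s)
          (fun W hW => div_nonneg (h0 W (Finset.mem_insert_of_mem hW)) hs0)
          (by rw [← Finset.sum_div, ← hs, div_self hsne])
      have hfun : (fun S => ∑ W ∈ insert i t, c W * pW W S)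
          = fun S => c i * pW i S + (1 - c i) * ∑ W ∈ t, (c W / s) * pW W S := by
        funext S
        rw [Finset.sum_insert hi]
        congr 1
        rw [Finset.mul_sum]
        refine Finset.sum_congr rfl fun W _ => ?_
        rw [show (1 : ℝ) - c i = s by linarith]
        field_simp
      rw [hfun, hCL (pW i) _ (pW_memPStar i) hq' (c i) hci hci1 a]
      rw [ih (fun W => c W / s)
        (fun W hW => div_nonneg (h0 W (Finset.mem_insert_of_mem hW)) hs0)
        (by rw [← Finset.sum_div, ← hs, div_self hsne]) a]
      rw [show (1 : ℝ) - c i = s by linarith, Finset.mul_sum]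
      congr 1
      refine Finset.sum_congr rfl fun W _ => ?_
      field_simp

lemma shapley_alloc_pW (W : Finset A) :
    ∑ a : A, shapley (pW W) a = 1 - pW W Finset.univ := by
  by_cases hW : W = Finset.univ
  · subst hW
    rw [Finset.sum_eq_zero (fun a _ => shapley_pW_mem _ a (Finset.mem_univ a))]
    simp [pW]
  · obtain ⟨a0, _, ha0⟩ : ∃ a0, a0 ∈ Finset.univ ∧ a0 ∉ W := by
      by_contra hc
      push_neg at hc
      exact hW (Finset.eq_univ_iff_forall.mpr (fun x => hc x (Finset.mem_univ x)))
    rw [pW_univ_of_not_mem W a0 ha0, sub_zero]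
    rw [← Finset.sum_sdiff (Finset.subset_univ W)]
    rw [Finset.sum_eq_zero (fun a ha => shapley_pW_mem W a ha), add_zero]
    have hval : ∀ a ∈ Finset.univ \ W, shapley (pW W) a
        = 1 / ((Fintype.card A : ℝ) - W.card) := by
      intro a ha
      exact shapley_pW_not_mem W a (Finset.mem_sdiff.mp ha).2
    rw [Finset.sum_congr rfl hval, Finset.sum_const, nsmul_eq_mul, Finset.card_univ_diff]
    have hWJ : W.card < Fintype.card A := by
      rw [← Finset.card_univ]
      exact Finset.card_lt_card
        (Finset.ssubset_univ_iff.mpr (fun h => ha0 (h ▸ Finset.mem_univ a0)))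
    have hne : (Fintype.card A : ℝ) - W.card ≠ 0 := by
      have : (W.card : ℝ) < Fintype.card A := by exact_mod_cast hWJ
      linarith
    rw [Nat.cast_sub hWJ.le]
    field_simp


/-- Theorem 3: an incompatibility measure satisfies *convex linearity*, *allocation of
incompatibility*, *anonymity* and *no cost—no incompatibility* iff it coincides with the
Shapley incompatibility measure on `P*`. -/
theorem theorem3 (hJ : 1 ≤ Fintype.card A) (ψ : (Finset A → ℝ) → A → ℝ) :
    (ConvexLinearity ψ ∧ Allocation ψ ∧ Anonymity ψ ∧ NoCost ψ) ↔
      ∀ p, memPStar p → ∀ a : A, ψ p a = shapley p a := by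
  constructor
  · rintro ⟨hCL, hAl, hAn, hNC⟩ p hp a
    obtain ⟨π, hpos, hsum, hrep⟩ := decompPStar hp
    have hpe : p = fun S => ∑ W : Finset A, π W * pW W S := funext hrep
    rw [hpe, psi_comb hCL Finset.univ π (fun W _ => hpos W) hsum a, shapley_comb]
    exact Finset.sum_congr rfl fun W _ => by rw [psi_pW hAl hAn hNC W a]
  · intro h
    refine ⟨?_, ?_, ?_, ?_⟩
    · intro p p' hp hp' l h0 h1 a
      rw [h _ (memPStar_comb hp hp' l h0 h1) a, h p hp a, h p' hp' a, shapley_two]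
    · intro p hp
      obtain ⟨π, hpos, hsum, hrep⟩ := decompPStar hp
      have hpe : p = fun S => ∑ W : Finset A, π W * pW W S := funext hrep
      rw [Finset.sum_congr rfl (fun a (_ : a ∈ Finset.univ) => h p hp a)]
      have hsh : ∀ a : A, shapley p a = ∑ W : Finset A, π W * shapley (pW W) a := by
        intro a
        conv_lhs => rw [hpe]
        rw [shapley_comb]
      rw [Finset.sum_congr rfl (fun a (_ : a ∈ Finset.univ) => hsh a), Finset.sum_comm]
      have : ∀ W : Finset A, ∑ a : A, π W * shapley (pW W) a = π W * (1 - pW W Finset.univ) := by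
        intro W
        rw [← Finset.mul_sum, shapley_alloc_pW]
      rw [Finset.sum_congr rfl (fun W (_ : W ∈ Finset.univ) => this W)]
      have hPu : p Finset.univ = ∑ W : Finset A, π W * pW W Finset.univ := hrep Finset.univ
      rw [hPu]
      simp_rw [mul_sub, mul_one]
      rw [Finset.sum_sub_distrib, hsum]
    · intro σ p hp a
      rw [h _ (memPStar_perm hp σ) a, h p hp (σ a), shapley_perm]
    · intro p hp a hzero
      rw [h p hp a]
      unfold shapley
      exact Finset.sum_eq_zero fun S hS => by rw [hzero S hS]; ring
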